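/- Let (X,r,μ) be an ultra-metric measure space, let 0 < δ ≤ h, let (τ_i^h)_{i=1,…,n(h)} be a family of closed h-representatives and (τ_j^δ)_{j=1,…,n(δ)} a family of closed δ-representatives. Then there is a partition {I_i}_{i=1,…,n(h)} of the index set {1,…,n(δ)} such that μ(B̄(τ_i^h,h)) = ∑_{j∈I_i} μ(B̄(τ_j^δ,δ)) for every i = 1,…,n(h). -/

import Mathlib

open MeasureTheory Metric

/-- The support of a Borel measure on a metric space: the set of points all of whose
open neighborhoods have positive measure. -/
def msupp {X : Type*} [MetricSpace X] [MeasurableSpace X] (μ : Measure X) : Set X :=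
  {x | ∀ ε : ℝ, 0 < ε → 0 < μ (ball x ε)}

/-- A family of closed `h`-representatives: points of the support whose closed `h`-balls are
pairwise `μ`-disjoint and together carry the total mass of `μ`. -/
def IsClosedRepFamily {X : Type*} [MetricSpace X] [MeasurableSpace X]
    (μ : Measure X) (h : ℝ) {ι : Type*} (τ : ι → X) : Prop :=
  (∀ i, τ i ∈ msupp μ) ∧
  (∀ i j : ι, i ≠ j → μ (closedBall (τ i) h ∩ closedBall (τ j) h) = 0) ∧
  (∑' i, μ (closedBall (τ i) h) = μ Set.univ)

/-- Given closed `h`-representatives and closed `δ`-representatives with `0 < δ ≤ h`,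
the index set of the `δ`-family can be partitioned (via the fibers of a map `p`) so that
the mass of each closed `h`-ball is the sum of the masses of the closed `δ`-balls in the
corresponding block. -/
theorem stmt2 {X : Type*} [MetricSpace X] [CompleteSpace X]
    [TopologicalSpace.SeparableSpace X] [MeasurableSpace X] [BorelSpace X]
    (hultra : ∀ x y z : X, dist x y ≤ max (dist x z) (dist z y))
    (μ : Measure X) [IsFiniteMeasure μ]
    (δ h : ℝ) (hδ : 0 < δ) (hδh : δ ≤ h)
    {ιh ιδ : Type} [Countable ιh] [Countable ιδ]
    (τh : ιh → X) (τδ : ιδ → X)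
    (hτh : IsClosedRepFamily μ h τh) (hτδ : IsClosedRepFamily μ δ τδ) :
    ∃ p : ιδ → ιh, ∀ i : ιh,
      μ (closedBall (τh i) h) = ∑' j : {j : ιδ // p j = i}, μ (closedBall (τδ (j : ιδ)) δ) := by
  classical
  obtain ⟨hsh, hdh, hsumh⟩ := hτh
  obtain ⟨hsδ, hdδ, hsumδ⟩ := hτδ
  have mb : ∀ (x : X) (R : ℝ), NullMeasurableSet (closedBall x R) μ :=
    fun x R => measurableSet_closedBall.nullMeasurableSet
  have hUh : μ (⋃ i, closedBall (τh i) h) = μ Set.univ := by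
    rw [measure_iUnion₀ (fun i j hij => hdh i j hij) (fun i => mb _ _)]; exact hsumh
  have hUδ : μ (⋃ j, closedBall (τδ j) δ) = μ Set.univ := by
    rw [measure_iUnion₀ (fun i j hij => hdδ i j hij) (fun i => mb _ _)]; exact hsumδ
  have hcomph : μ (Set.univ \ ⋃ i, closedBall (τh i) h) = 0 := by
    rw [measure_diff (Set.subset_univ _) (NullMeasurableSet.iUnion fun i => mb _ _)
      (measure_ne_top μ _), hUh, tsub_self]
  have hcompδ : μ (Set.univ \ ⋃ j, closedBall (τδ j) δ) = 0 := by
    rw [measure_diff (Set.subset_univ _) (NullMeasurableSet.iUnion fun i => mb _ _)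
      (measure_ne_top μ _), hUδ, tsub_self]
  have hpos : ∀ j, 0 < μ (closedBall (τδ j) δ) :=
    fun j => lt_of_lt_of_le (hsδ j δ hδ) (measure_mono ball_subset_closedBall)
  have hex : ∀ j, ∃ i, μ (closedBall (τδ j) δ ∩ closedBall (τh i) h) ≠ 0 := by
    intro j
    by_contra hcon
    push_neg at hcon
    have h1 : μ (closedBall (τδ j) δ ∩ ⋃ i, closedBall (τh i) h) = 0 := by
      rw [Set.inter_iUnion]
      exact measure_iUnion_null fun i => hcon i
    have h2 : μ (closedBall (τδ j) δ \ ⋃ i, closedBall (τh i) h) = 0 :=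
      measure_mono_null (Set.diff_subset_diff_left (Set.subset_univ _)) hcomph
    have hle := measure_le_inter_add_diff μ (closedBall (τδ j) δ) (⋃ i, closedBall (τh i) h)
    rw [h1, h2, add_zero] at hle
    exact absurd (le_antisymm hle zero_le) (hpos j).ne'
  choose p hp using hex
  have hsub : ∀ j, closedBall (τδ j) δ ⊆ closedBall (τh (p j)) h := by
    intro j y hy
    obtain ⟨z, hz1, hz2⟩ := nonempty_of_measure_ne_zero (hp j)
    rw [mem_closedBall] at hy hz1 hz2 ⊢
    have hyz : dist y z ≤ δ := by
      refine (hultra y z (τδ j)).trans (max_le hy ?_)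
      rw [dist_comm]; exact hz1
    refine (hultra y (τh (p j)) z).trans (max_le (hyz.trans hδh) hz2)
  refine ⟨p, fun i => ?_⟩
  have hUn : (∑' j : {j : ιδ // p j = i}, μ (closedBall (τδ (j : ιδ)) δ))
      = μ (⋃ j : {j : ιδ // p j = i}, closedBall (τδ (j : ιδ)) δ) := by
    exact (measure_iUnion₀ (fun a b hab => by exact hdδ a.1 b.1 (Subtype.coe_injective.ne hab))
      (fun a => mb _ _)).symm
  rw [hUn]
  apply le_antisymm
  · have step := measure_le_inter_add_diff μ (closedBall (τh i) h) (⋃ j, closedBall (τδ j) δ)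
    have hd0 : μ (closedBall (τh i) h \ ⋃ j, closedBall (τδ j) δ) = 0 :=
      measure_mono_null (Set.diff_subset_diff_left (Set.subset_univ _)) hcompδ
    rw [hd0, add_zero] at step
    refine step.trans ?_
    rw [Set.inter_iUnion]
    have hcov : (⋃ j, closedBall (τh i) h ∩ closedBall (τδ j) δ) ⊆
        (⋃ j : {j : ιδ // p j = i}, closedBall (τδ (j : ιδ)) δ) ∪
        (⋃ j ∈ {j : ιδ | p j ≠ i}, closedBall (τh i) h ∩ closedBall (τh (p j)) h) := by
      intro x hx
      simp only [Set.mem_iUnion] at hx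
      obtain ⟨j, hx1, hx2⟩ := hx
      by_cases hji : p j = i
      · exact Or.inl (Set.mem_iUnion.2 ⟨⟨j, hji⟩, hx2⟩)
      · exact Or.inr (Set.mem_iUnion₂.2 ⟨j, hji, hx1, hsub j hx2⟩)
    refine (measure_mono hcov).trans ((measure_union_le _ _).trans ?_)
    have hz : μ (⋃ j ∈ {j : ιδ | p j ≠ i}, closedBall (τh i) h ∩ closedBall (τh (p j)) h)
        = 0 :=
      (measure_biUnion_null_iff (Set.to_countable _)).2 fun j hj => hdh i (p j) (Ne.symm hj)
    rw [hz, add_zero]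
  · refine measure_mono (Set.iUnion_subset fun j => ?_)
    obtain ⟨j, rfl⟩ := j
    exact hsub j
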